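/- Let s ≥ 5 be an integer and let λ be an s-minimal biliaison type with q_s(λ) ≤ (s+1)². Then one of the following occurs: (1) λ = ∅ and q_s(λ) = 0; (2) λ = (1) or λ = (s−1), and q_s(λ) = (s−1)²; (3) 5 ≤ s ≤ 7 and λ = (2) or λ = (s−2), with q_s(λ) = 2(s−1)(s−2); (4) s = 6 and λ = (3), with q_s(λ) = 45; (5) s = 5 or s = 6 and λ = (1, s−1); (6) s = 5 and λ = (1, 3) or λ = (2, 4), with q_s(λ) = 36; (7) s = 5 and λ = (1, 2) or λ = (3, 4), with q_s(λ) = 34. -/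

import Mathlib

/-- An `s`-minimal biliaison type: a strictly increasing finite sequence of
positive integers, all strictly less than `s` (the empty sequence is allowed). -/
def SMinimal (s : ℕ) (l : List ℕ) : Prop :=
  l.Chain' (· < ·) ∧ ∀ k ∈ l, 0 < k ∧ k < s

/-- The quadratic form `q_s(λ) = Σ_i k_i(s−1)(s−k_i) − 2 Σ_{i<j} k_i(s−k_j)`. -/
def qform (s : ℕ) (l : List ℕ) : ℤ :=
  (∑ i : Fin l.length, (l.get i : ℤ) * ((s : ℤ) - 1) * ((s : ℤ) - l.get i))
  - 2 * ∑ i : Fin l.length, ∑ j : Fin l.length,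
      if (i : ℕ) < (j : ℕ) then (l.get i : ℤ) * ((s : ℤ) - l.get j) else 0

/-- The `s`-dual `λ′ = (s−k_u, …, s−k_1)` of a biliaison type. -/
def sdual (s : ℕ) (l : List ℕ) : List ℕ := (l.map (fun k => s - k)).reverse

lemma cross_cons (s k : ℕ) (t : List ℕ) :
    (∑ i : Fin (k::t).length, ∑ j : Fin (k::t).length,
      if (i : ℕ) < (j : ℕ) then ((k::t).get i : ℤ) * ((s : ℤ) - (k::t).get j) else 0)
    = (k : ℤ) * (∑ i : Fin t.length, ((s : ℤ) - t.get i))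
      + ∑ i : Fin t.length, ∑ j : Fin t.length,
        if (i : ℕ) < (j : ℕ) then (t.get i : ℤ) * ((s : ℤ) - t.get j) else 0 := by
  simp only [List.length_cons, Fin.sum_univ_succ, List.get_eq_getElem, Fin.val_zero,
    Fin.val_succ, List.getElem_cons_zero, List.getElem_cons_succ, lt_self_iff_false,
    if_false, Nat.zero_lt_succ, if_true, Nat.not_lt_zero, Nat.add_one_lt_add_one_iff,
    Finset.mul_sum, zero_add, add_zero]

lemma sum_split (s k : ℕ) (t : List ℕ) :
    (∑ i : Fin (k::t).length, ((k::t).get i : ℤ) * ((s : ℤ) - 1) * ((s : ℤ) - (k::t).get i))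
    = (k : ℤ) * ((s : ℤ) - 1) * ((s : ℤ) - k)
      + ∑ i : Fin t.length, (t.get i : ℤ) * ((s : ℤ) - 1) * ((s : ℤ) - t.get i) := by
  simp [Fin.sum_univ_succ]

lemma qform_cons (s k : ℕ) (t : List ℕ) :
    qform s (k :: t) = (k : ℤ) * ((s : ℤ) - 1) * ((s : ℤ) - k)
      - 2 * (k : ℤ) * (∑ i : Fin t.length, ((s : ℤ) - t.get i)) + qform s t := by
  unfold qform
  rw [cross_cons, sum_split]
  ring

lemma qform_nil (s : ℕ) : qform s [] = 0 := by simp [qform]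

lemma q1 (s a : ℕ) : qform s [a] = (a:ℤ)*((s:ℤ)-1)*((s:ℤ)-a) := by
  simp [qform, Fin.sum_univ_succ]

lemma q2 (s a b : ℕ) : qform s [a, b] = (a:ℤ)*((s:ℤ)-1)*((s:ℤ)-a)
    + (b:ℤ)*((s:ℤ)-1)*((s:ℤ)-b) - 2*(a:ℤ)*((s:ℤ)-b) := by
  simp [qform, Fin.sum_univ_succ]; ring

lemma q3 (s a b c : ℕ) : qform s [a, b, c] = (a:ℤ)*((s:ℤ)-1)*((s:ℤ)-a)
    + (b:ℤ)*((s:ℤ)-1)*((s:ℤ)-b) + (c:ℤ)*((s:ℤ)-1)*((s:ℤ)-c)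
    - 2*(a:ℤ)*(((s:ℤ)-b) + ((s:ℤ)-c)) - 2*(b:ℤ)*((s:ℤ)-c) := by
  simp [qform, Fin.sum_univ_succ]
  ring

lemma key (s : ℕ) (l : List ℕ) (h : ∀ k ∈ l, 0 < k ∧ k < s) (hp : l.Pairwise (· < ·)) :
    2 * ((s:ℤ) - l.length) * (∑ i : Fin l.length, (l.get i : ℤ) * ((s:ℤ) - l.get i))
      + ((s:ℤ) - 1) * l.length * ((l.length:ℤ) - 1) ≤ 2 * qform s l := by
  induction l with
  | nil => simp [qform]
  | cons k t ih =>
    obtain ⟨hk, ht⟩ := List.pairwise_cons.mp hp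
    obtain ⟨hk0, hks⟩ := h k List.mem_cons_self
    have ih' := ih (fun j hj => h j (List.mem_cons_of_mem _ hj)) ht
    have hpt : ∀ i : Fin t.length, ((s:ℤ) - 1) ≤
        (k:ℤ)*((s:ℤ)-k) + (t.get i : ℤ)*((s:ℤ)-t.get i) - 2*(k:ℤ)*((s:ℤ)-t.get i) := by
      intro i
      have hmem : t.get i ∈ t := List.get_mem t i
      obtain ⟨h1, h2⟩ := h _ (List.mem_cons_of_mem _ hmem)
      have h3 := hk _ hmem
      have c1 : (1:ℤ) ≤ (k:ℤ) := by exact_mod_cast hk0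
      have c2 : (t.get i : ℤ) ≤ (s:ℤ) - 1 := by
        have : (t.get i : ℤ) < (s:ℤ) := by exact_mod_cast h2
        linarith
      have c3 : (k:ℤ) + 1 ≤ (t.get i : ℤ) := by exact_mod_cast h3
      nlinarith [mul_nonneg (by linarith : (0:ℤ) ≤ (t.get i:ℤ) - (k:ℤ) - 1)
        (by linarith : (0:ℤ) ≤ (k:ℤ) + (s:ℤ) - (t.get i:ℤ) - 1)]
    have hsum : (t.length:ℤ) * ((s:ℤ)-1) ≤ (t.length:ℤ) * ((k:ℤ)*((s:ℤ)-k))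
        + (∑ i : Fin t.length, (t.get i : ℤ) * ((s:ℤ) - t.get i))
        - 2*(k:ℤ)*(∑ i : Fin t.length, ((s:ℤ) - t.get i)) := by
      have h0 := Finset.sum_le_sum (fun i (_ : i ∈ Finset.univ) => hpt i)
      simp [Finset.sum_add_distrib, Finset.sum_sub_distrib, Finset.sum_const,
        Finset.card_univ, nsmul_eq_mul, ← Finset.mul_sum, mul_comm] at h0 ⊢
      linarith
    rw [qform_cons]
    have e1 : (∑ i : Fin (k::t).length, ((k::t).get i : ℤ) * ((s:ℤ) - (k::t).get i))
        = (k:ℤ)*((s:ℤ)-(k:ℤ)) + ∑ i : Fin t.length, (t.get i : ℤ) * ((s:ℤ) - t.get i) := by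
      simp [Fin.sum_univ_succ]
    have e2 : (((k::t).length : ℕ) : ℤ) = (t.length : ℤ) + 1 := by
      push_cast [List.length_cons]; ring
    rw [e1, e2]
    nlinarith [ih', hsum]

lemma len_le (s : ℕ) (l : List ℕ) (h : ∀ k ∈ l, 0 < k ∧ k < s)
    (hp : l.Pairwise (· < ·)) : l.length ≤ s - 1 := by
  have hn : l.Nodup := hp.nodup
  have hsub : l.toFinset ⊆ Finset.Ioo 0 s := by
    intro x hx
    rw [List.mem_toFinset] at hx
    exact Finset.mem_Ioo.mpr (h x hx)
  calc l.length = l.toFinset.card := (List.toFinset_card_of_nodup hn).symm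
    _ ≤ (Finset.Ioo 0 s).card := Finset.card_le_card hsub
    _ = s - 1 := by simp [Nat.card_Ioo]


/-- Corollary 8.9: the classification of `s`-minimal biliaison types `λ` with
`q_s(λ) ≤ (s+1)²` when `s ≥ 5`. -/
theorem stmt9 (s : ℕ) (hs : 5 ≤ s) (l : List ℕ) (hl : SMinimal s l)
    (hq : qform s l ≤ ((s : ℤ) + 1) ^ 2) :
    (l = [] ∧ qform s l = 0) ∨
    ((l = [1] ∨ l = [s - 1]) ∧ qform s l = ((s : ℤ) - 1) ^ 2) ∨
    (5 ≤ s ∧ s ≤ 7 ∧ (l = [2] ∨ l = [s - 2]) ∧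
      qform s l = 2 * ((s : ℤ) - 1) * ((s : ℤ) - 2)) ∨
    (s = 6 ∧ l = [3] ∧ qform s l = 45) ∨
    ((s = 5 ∨ s = 6) ∧ l = [1, s - 1]) ∨
    (s = 5 ∧ (l = [1, 3] ∨ l = [2, 4]) ∧ qform s l = 36) ∨
    (s = 5 ∧ (l = [1, 2] ∨ l = [3, 4]) ∧ qform s l = 34) := by
  obtain ⟨hc, hmem⟩ := hl
  have hp : l.Pairwise (· < ·) := List.isChain_iff_pairwise.mp hc
  have csZ : (5:ℤ) ≤ (s:ℤ) := by exact_mod_cast hs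
  match l, hp, hmem, hq with
  | [], _, _, _ => exact Or.inl ⟨rfl, qform_nil s⟩
  | [a], hp, hmem, hq =>
    obtain ⟨ha0, has⟩ := hmem a (by simp)
    have hcase : a = 1 ∨ a = s-1 ∨ a = 2 ∨ a = s-2 ∨ (3 ≤ a ∧ a + 3 ≤ s) := by omega
    rcases hcase with rfl | ha | rfl | ha | ⟨h3a, h3s⟩
    · exact Or.inr (Or.inl ⟨Or.inl rfl, by rw [q1]; push_cast; ring⟩)
    · refine Or.inr (Or.inl ⟨Or.inr (by rw [ha]), ?_⟩)
      have caZ : (a:ℤ) = (s:ℤ) - 1 := by omega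
      rw [q1, caZ]; ring
    · have hq' := hq
      rw [q1] at hq'
      have hs7 : s ≤ 7 := by
        by_contra h78
        have c8 : (8:ℤ) ≤ (s:ℤ) := by exact_mod_cast (by omega : 8 ≤ s)
        push_cast at hq'
        nlinarith [hq']
      refine Or.inr (Or.inr (Or.inl ⟨hs, hs7, Or.inl rfl, ?_⟩))
      rw [q1]; push_cast; ring
    · have caZ : (a:ℤ) = (s:ℤ) - 2 := by omega
      have hq' := hq
      rw [q1, caZ] at hq'
      have hs7 : s ≤ 7 := by
        by_contra h78
        have c8 : (8:ℤ) ≤ (s:ℤ) := by exact_mod_cast (by omega : 8 ≤ s)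
        nlinarith [hq']
      refine Or.inr (Or.inr (Or.inl ⟨hs, hs7, Or.inr (by rw [ha]), ?_⟩))
      rw [q1, caZ]; ring
    · have c3 : (3:ℤ) ≤ (a:ℤ) := by exact_mod_cast h3a
      have c4 : (a:ℤ) ≤ (s:ℤ) - 3 := by omega
      have hq' := hq
      rw [q1] at hq'
      have hs6 : s ≤ 6 := by
        by_contra h7
        have c7 : (7:ℤ) ≤ (s:ℤ) := by exact_mod_cast (by omega : 7 ≤ s)
        nlinarith [hq', mul_nonneg (by linarith : (0:ℤ) ≤ (a:ℤ)-3)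
          (by linarith : (0:ℤ) ≤ (s:ℤ)-3-(a:ℤ))]
      have hsa : s = 6 ∧ a = 3 := by omega
      obtain ⟨rfl, rfl⟩ := hsa
      refine Or.inr (Or.inr (Or.inr (Or.inl ⟨rfl, rfl, ?_⟩)))
      rw [q1]; norm_num
  | [a, b], hp, hmem, hq =>
    obtain ⟨ha0, has⟩ := hmem a (by simp)
    obtain ⟨hb0, hbs⟩ := hmem b (by simp)
    have hab : a < b := (List.pairwise_cons.mp hp).1 b (by simp)
    have hq' := hq
    rw [q2] at hq'
    have hs6 : s ≤ 6 := by
      by_contra h7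
      have c7 : (7:ℤ) ≤ (s:ℤ) := by exact_mod_cast (by omega : 7 ≤ s)
      have ca1 : (1:ℤ) ≤ (a:ℤ) := by exact_mod_cast ha0
      have cas : (a:ℤ) ≤ (s:ℤ) - 1 := by omega
      have cb1 : (1:ℤ) ≤ (b:ℤ) := by exact_mod_cast hb0
      have cbs : (b:ℤ) ≤ (s:ℤ) - 1 := by omega
      have cab : (a:ℤ) + 1 ≤ (b:ℤ) := by omega
      have P1 : (0:ℤ) ≤ ((s:ℤ)-2)*(((a:ℤ)-1)*((s:ℤ)-1-(a:ℤ))) :=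
        mul_nonneg (by linarith) (mul_nonneg (by linarith) (by linarith))
      have P2 : (0:ℤ) ≤ ((s:ℤ)-2)*(((b:ℤ)-1)*((s:ℤ)-1-(b:ℤ))) :=
        mul_nonneg (by linarith) (mul_nonneg (by linarith) (by linarith))
      have P3 : (0:ℤ) ≤ ((b:ℤ)-(a:ℤ)-1)*((a:ℤ)+(s:ℤ)-(b:ℤ)-1) :=
        mul_nonneg (by linarith) (by linarith)
      nlinarith [hq', P1, P2, P3]
    have ha5 : a < s := by omega
    interval_cases s
    · interval_cases a <;> interval_cases b <;> revert hq <;> norm_num [q2]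
    · interval_cases a <;> interval_cases b <;> revert hq <;> norm_num [q2]
  | (a :: b :: c :: t), hp, hmem, hq =>
    have hlen : (a :: b :: c :: t).length ≤ s - 1 := len_le s _ hmem hp
    have hkey := key s (a :: b :: c :: t) hmem hp
    have hpt : ∀ i : Fin (a :: b :: c :: t).length,
        ((s:ℤ)-1) ≤ ((a :: b :: c :: t).get i : ℤ) * ((s:ℤ) - (a :: b :: c :: t).get i) := by
      intro i
      obtain ⟨h1, h2⟩ := hmem _ (List.get_mem _ i)
      have c1 : (1:ℤ) ≤ ((a :: b :: c :: t).get i : ℤ) := by exact_mod_cast h1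
      have c2 : ((a :: b :: c :: t).get i : ℤ) ≤ (s:ℤ)-1 := by
        have : ((a :: b :: c :: t).get i : ℤ) < (s:ℤ) := by exact_mod_cast h2
        linarith
      nlinarith [mul_nonneg (by linarith : (0:ℤ) ≤ ((a :: b :: c :: t).get i:ℤ)-1)
        (by linarith : (0:ℤ) ≤ (s:ℤ)-1-((a :: b :: c :: t).get i:ℤ))]
    have hF : ((a :: b :: c :: t).length:ℤ)*((s:ℤ)-1) ≤
        ∑ i : Fin (a :: b :: c :: t).length,
          ((a :: b :: c :: t).get i : ℤ) * ((s:ℤ) - (a :: b :: c :: t).get i) := by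
      have h0 := Finset.sum_le_sum (fun i (_ : i ∈ Finset.univ) => hpt i)
      simp [Finset.sum_const, Finset.card_univ, nsmul_eq_mul] at h0 ⊢
      linarith
    have hsn : (((a :: b :: c :: t).length:ℕ):ℤ) ≤ (s:ℤ) - 1 := by omega
    have hlt : (a :: b :: c :: t).length = t.length + 3 := by simp
    have h3n : (3:ℤ) ≤ (((a :: b :: c :: t).length:ℕ):ℤ) := by omega
    have hmul : 2*((s:ℤ)-(a :: b :: c :: t).length)*(((a :: b :: c :: t).length:ℤ)*((s:ℤ)-1)) ≤
        2*((s:ℤ)-(a :: b :: c :: t).length)*(∑ i : Fin (a :: b :: c :: t).length,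
          ((a :: b :: c :: t).get i : ℤ) * ((s:ℤ) - (a :: b :: c :: t).get i)) :=
      mul_le_mul_of_nonneg_left hF (by linarith)
    have hbig : ((a :: b :: c :: t).length:ℤ) * (2*(s:ℤ) - ((a :: b :: c :: t).length:ℤ) - 1) * ((s:ℤ)-1)
        ≤ 2*((s:ℤ)+1)^2 := by
      nlinarith [hkey, hmul, hq]
    by_cases h6 : 6 ≤ s
    · exfalso
      have c6 : (6:ℤ) ≤ (s:ℤ) := by exact_mod_cast h6
      have P2 : (0:ℤ) ≤ ((s:ℤ)-1)*((((a :: b :: c :: t).length:ℤ)-3)*((s:ℤ)-1-((a :: b :: c :: t).length:ℤ))) :=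
        mul_nonneg (by linarith) (mul_nonneg (by linarith) (by linarith))
      have Q2 : (0:ℤ) ≤ ((s:ℤ)-1)*((((a :: b :: c :: t).length:ℤ)-3)*((s:ℤ)-3)) :=
        mul_nonneg (by linarith) (mul_nonneg (by linarith) (by linarith))
      nlinarith [hbig, P2, Q2]
    · have hs5 : s = 5 := by omega
      subst hs5
      obtain ⟨ha0, has⟩ := hmem a (by simp)
      obtain ⟨hb0, hbs⟩ := hmem b (by simp)
      obtain ⟨hc0, hcs⟩ := hmem c (by simp)
      obtain ⟨h1, hp'⟩ := List.pairwise_cons.mp hp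
      obtain ⟨h2, hp''⟩ := List.pairwise_cons.mp hp'
      have hab : a < b := h1 b (by simp)
      have hbc : b < c := h2 c (by simp)
      rcases t with _ | ⟨d, t2⟩
      · exfalso
        interval_cases a <;> interval_cases b <;> interval_cases c <;>
          first
            | omega
            | norm_num [q3] at hq
      · exfalso
        have e4 : (d :: t2).length = t2.length + 1 := by simp
        have h4 : t2.length = 0 := by omega
        rw [List.length_eq_zero_iff] at h4
        subst h4
        norm_num at hbig
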